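/- Let R be a commutative noetherian ring, p a prime ideal, T an R-linear triangulated category, and S_T(p) = {M ∈ T | a·1_M = 0 for some a ∉ p}. Then the canonical functor Q : T → T/S_T(p) to the Verdier quotient induces, for all objects M, N, an isomorphism of R-modules Hom_T(M,N)_p ≅ Hom_{T/S_T(p)}(M,N), sending f/a to Q(a·1_N)^{-1} ∘ Q(f). -/

import Mathlib

open CategoryTheory Limits Pretriangulated

universe v u

variable (C : Type u) [Category.{v} C] [Preadditive C] [HasZeroObject C]
  [HasShift C ℤ] [∀ n : ℤ, (shiftFunctor C n).Additive] [Pretriangulated C]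

/-- A thick subcategory of a (pre)triangulated category, modelled as a set of objects
closed under isomorphisms, zero objects, shifts, extensions and direct summands. -/
structure ThickSubcat : Type (max u v) where
  set : Set C
  mem_of_iso : ∀ {X Y : C}, (X ≅ Y) → X ∈ set → Y ∈ set
  zero_mem : ∀ Z : C, IsZero Z → Z ∈ set
  shift_mem : ∀ (X : C) (n : ℤ), X ∈ set → X⟦n⟧ ∈ set
  ext_mem : ∀ T : Triangle C, T ∈ (distTriang C) → T.obj₁ ∈ set → T.obj₃ ∈ set → T.obj₂ ∈ set
  summand_mem : ∀ (X Y : C) (i : Y ⟶ X) (r : X ⟶ Y), i ≫ r = 𝟙 Y → X ∈ set → Y ∈ set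

lemma ThickSubcat.set_injective : Function.Injective (ThickSubcat.set (C := C)) := by
  rintro ⟨s, _, _, _, _, _⟩ ⟨t, _, _, _, _, _⟩ h
  cases h; rfl

instance : PartialOrder (ThickSubcat C) :=
  PartialOrder.lift ThickSubcat.set (ThickSubcat.set_injective C)

/-- A thick subcategory `P` is *prime* if there is a unique minimal element among the
thick subcategories properly containing `P`. -/
def IsPrimeThick (P : ThickSubcat C) : Prop :=
  ∃! X : ThickSubcat C, Minimal (fun Y : ThickSubcat C => P < Y) X

/-- The spectrum: the set of prime thick subcategories. -/
def SpecTri := {P : ThickSubcat C // IsPrimeThick C P}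

/-- The support of an object `M`. -/
def suppObj (M : C) : Set (SpecTri C) := {P | M ∉ P.1.set}

/-- The topology on the spectrum, with closed basis the supports `suppObj M`. -/
instance : TopologicalSpace (SpecTri C) :=
  TopologicalSpace.generateFrom {U | ∃ M : C, U = (suppObj C M)ᶜ}

/-- The class of morphisms of `C` whose cone lies in `S_T(p)`
(the thick subcategory of objects killed by some `a ∉ p`). -/
def coneW (R : Type*) [CommRing R] (p : Ideal R) [p.IsPrime] [CategoryTheory.Linear R C] :
    MorphismProperty C :=
  fun X Y f => ∃ (Z : C) (g : Y ⟶ Z) (h : Z ⟶ X⟦(1 : ℤ)⟧),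
    Triangle.mk f g h ∈ (distTriang C) ∧ ∃ a ∈ p.primeCompl, a • (𝟙 Z) = 0

section Auxiliary

open Triangulated ZeroObject

variable (R : Type*) [CommRing R] (p : Ideal R) [p.IsPrime]
  [CategoryTheory.Linear R C] [∀ n : ℤ, (shiftFunctor C n).Linear R]

lemma shift_smul_id_zero {Z : C} {a : R} (h : a • (𝟙 Z) = 0) (n : ℤ) :
    a • (𝟙 (Z⟦n⟧)) = 0 := by
  rw [← CategoryTheory.Functor.map_id (shiftFunctor C n), ← Functor.map_smul, h,
    CategoryTheory.Functor.map_zero]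

/-- The triangulated subcategory of objects killed by some `a ∉ p`. -/
def killSub : ObjectProperty C :=
  fun Z => ∃ a ∈ p.primeCompl, a • (𝟙 Z) = 0

instance killSub_containsZero : (killSub C R p).ContainsZero :=
  ⟨⟨0, isZero_zero C, 1, p.primeCompl.one_mem, by rw [one_smul, Limits.id_zero]⟩⟩

lemma coneW_eq : coneW C R p = (killSub C R p).trW := by
  ext X Y f
  constructor
  · rintro ⟨Z, g, h, hT, ha⟩; exact ⟨Z, g, h, hT, ha⟩
  · rintro ⟨Z, g, h, hT, ha⟩; exact ⟨Z, g, h, hT, ha⟩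

instance killSub_W_mult : (killSub C R p).trW.IsMultiplicative where
  comp_mem := by
    rintro X₁ X₂ X₃ u₁₂ u₂₃ ⟨Z₁, g₁, h₁, H₁, a, ha, hZ₁⟩ ⟨Z₂, g₂, h₂, H₂, b, hb, hZ₂⟩
    obtain ⟨Z, u, v, H⟩ := distinguished_cocone_triangle (u₁₂ ≫ u₂₃)
    -- `b • 𝟙 X₃` factors as `s' ≫ u₂₃`
    obtain ⟨s', hs'⟩ : ∃ s' : X₃ ⟶ X₂, b • 𝟙 X₃ = s' ≫ u₂₃ :=
      Triangle.coyoneda_exact₂ _ H₂ (b • 𝟙 X₃) (by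
      change (b • 𝟙 X₃) ≫ g₂ = 0
      have : (b • 𝟙 X₃) ≫ g₂ = g₂ ≫ (b • 𝟙 Z₂) := by simp
      rw [this, hZ₂, comp_zero])
    -- `a • 𝟙 X₂` factors as `t' ≫ u₁₂`
    obtain ⟨t', ht'⟩ : ∃ t' : X₂ ⟶ X₁, a • 𝟙 X₂ = t' ≫ u₁₂ :=
      Triangle.coyoneda_exact₂ _ H₁ (a • 𝟙 X₂) (by
      change (a • 𝟙 X₂) ≫ g₁ = 0
      have : (a • 𝟙 X₂) ≫ g₁ = g₁ ≫ (a • 𝟙 Z₁) := by simp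
      rw [this, hZ₁, comp_zero])
    -- `a • 𝟙 X₁` factors as `u₁₂ ≫ r`
    obtain ⟨r, hr⟩ : ∃ r : X₂ ⟶ X₁, a • 𝟙 X₁ = u₁₂ ≫ r :=
      Triangle.yoneda_exact₂ _ (inv_rot_of_distTriang _ H₁) (a • 𝟙 X₁) (by
      have h0 : a • (𝟙 ((Triangle.mk u₁₂ g₁ h₁).invRotate.obj₁)) = 0 := shift_smul_id_zero C R hZ₁ (-1)
      have : (Triangle.mk u₁₂ g₁ h₁).invRotate.mor₁ ≫ (a • 𝟙 X₁)
          = (a • 𝟙 ((Triangle.mk u₁₂ g₁ h₁).invRotate.obj₁)) ≫ (Triangle.mk u₁₂ g₁ h₁).invRotate.mor₁ := by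
        have key : ∀ (Y : C) (m : Y ⟶ X₁), m ≫ (a • 𝟙 X₁) = (a • 𝟙 Y) ≫ m := by
          intro Y m; simp
        exact key _ _
      rw [this, h0, zero_comp]
      rfl)
    -- `b • 𝟙 X₂` factors as `u₂₃ ≫ q`
    obtain ⟨q, hq⟩ : ∃ q : X₃ ⟶ X₂, b • 𝟙 X₂ = u₂₃ ≫ q :=
      Triangle.yoneda_exact₂ _ (inv_rot_of_distTriang _ H₂) (b • 𝟙 X₂) (by
      have h0 : b • (𝟙 ((Triangle.mk u₂₃ g₂ h₂).invRotate.obj₁)) = 0 := shift_smul_id_zero C R hZ₂ (-1)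
      have : (Triangle.mk u₂₃ g₂ h₂).invRotate.mor₁ ≫ (b • 𝟙 X₂)
          = (b • 𝟙 ((Triangle.mk u₂₃ g₂ h₂).invRotate.obj₁)) ≫ (Triangle.mk u₂₃ g₂ h₂).invRotate.mor₁ := by
        have key : ∀ (Y : C) (m : Y ⟶ X₂), m ≫ (b • 𝟙 X₂) = (b • 𝟙 Y) ≫ m := by
          intro Y m; simp
        exact key _ _
      rw [this, h0, zero_comp]
      rfl)
    -- `(a*b) • u = 0`
    have hu : ((a * b) • 𝟙 X₃) ≫ u = 0 := by
      have h1 : (a * b) • 𝟙 X₃ = s' ≫ (t' ≫ u₁₂) ≫ u₂₃ := by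
        rw [← ht', mul_smul, hs']
        simp
      have h2 : u₁₂ ≫ u₂₃ ≫ u = 0 := by
        rw [← Category.assoc]
        exact comp_distTriang_mor_zero₁₂ _ H
      rw [h1]
      simp only [Category.assoc]
      rw [h2, comp_zero, comp_zero]
    -- `(a*b) • v = 0`
    have hv : ((a * b) • 𝟙 Z) ≫ v = 0 := by
      have h3 : (a * b) • 𝟙 X₁ = (u₁₂ ≫ u₂₃) ≫ (q ≫ r) := by
        rw [mul_comm, mul_smul, hr,
          show (u₁₂ ≫ u₂₃) ≫ q ≫ r = u₁₂ ≫ (u₂₃ ≫ q) ≫ r by simp, ← hq]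
        simp
      have h2 : v ≫ (u₁₂ ≫ u₂₃)⟦(1 : ℤ)⟧' = 0 := comp_distTriang_mor_zero₃₁ _ H
      have h4 : ((a * b) • 𝟙 Z) ≫ v = v ≫ (((a * b) • 𝟙 X₁)⟦(1 : ℤ)⟧') := by
        rw [Functor.map_smul, CategoryTheory.Functor.map_id]
        simp
      rw [h4, h3, Functor.map_comp, ← Category.assoc, h2, zero_comp]
    obtain ⟨w, hw⟩ : ∃ w : Z ⟶ X₃, (a * b) • 𝟙 Z = w ≫ u :=
      Triangle.coyoneda_exact₃ _ H ((a * b) • 𝟙 Z) hv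
    refine ⟨Z, u, v, H, (a * b) * (a * b),
      p.primeCompl.mul_mem (p.primeCompl.mul_mem ha hb) (p.primeCompl.mul_mem ha hb), ?_⟩
    have h5 : ((a * b) * (a * b)) • 𝟙 Z = w ≫ (((a * b) • 𝟙 X₃) ≫ u) := by
      rw [mul_smul, hw]
      simp
    rw [h5, hu, comp_zero]

instance killSub_W_leftCalc : (killSub C R p).trW.HasLeftCalculusOfFractions where
  exists_leftFraction X Y φ := by
    obtain ⟨Z, f, g, H, mem⟩ := φ.hs
    obtain ⟨Y', s', f', mem'⟩ := distinguished_cocone_triangle₂ (g ≫ φ.f⟦1⟧')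
    obtain ⟨b, ⟨hb₁, _⟩⟩ :=
      complete_distinguished_triangle_morphism₂ _ _ H mem' φ.f (𝟙 Z) (by exact (Category.id_comp _).symm)
    exact ⟨MorphismProperty.LeftFraction.mk b s' ⟨_, _, _, mem', mem⟩, hb₁.symm⟩
  ext := by
    rintro X' X Y f₁ f₂ s ⟨Z, g, h, H, mem⟩ hf₁
    have hf₂ : s ≫ (f₁ - f₂) = 0 := by rw [Preadditive.comp_sub, hf₁, sub_self]
    obtain ⟨q, hq⟩ : ∃ q : Z ⟶ Y, f₁ - f₂ = g ≫ q := Triangle.yoneda_exact₂ _ H _ hf₂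
    obtain ⟨Y', r, t, mem'⟩ := distinguished_cocone_triangle q
    refine ⟨Y', r, ?_, ?_⟩
    · exact ⟨_, _, _, rot_of_distTriang _ mem', by
        obtain ⟨a, ha, hm⟩ := mem
        exact ⟨a, ha, shift_smul_id_zero C R hm 1⟩⟩
    · have eq := comp_distTriang_mor_zero₁₂ _ mem'
      change q ≫ r = 0 at eq
      rw [← sub_eq_zero, ← Preadditive.sub_comp, hq, Category.assoc, eq, comp_zero]

/-- A localization functor into a preadditive category sends `0` to `0`. -/
lemma map_zero_of_localization {D : Type*} [Category D] [Preadditive D] (L : C ⥤ D)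
    (W : MorphismProperty C) [L.IsLocalization W] [W.HasLeftCalculusOfFractions]
    (P' Q' : C) : L.map (0 : P' ⟶ Q') = 0 := by
  have h0 : L.map (0 : (0 : C) ⟶ Q') = 0 := by
    obtain ⟨φ, hφ⟩ := Localization.exists_leftFraction L W (0 : L.obj 0 ⟶ L.obj Q')
    have h1 : (0 : L.obj 0 ⟶ L.obj Q') ≫ L.map φ.s = L.map φ.f := by
      rw [hφ]
      exact φ.map_comp_map_s L (Localization.inverts L W)
    rw [zero_comp] at h1
    have h2 : (0 : (0 : C) ⟶ Q') ≫ φ.s = φ.f := (Limits.isZero_zero C).eq_of_src _ _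
    have := Localization.inverts L W φ.s φ.hs
    rw [← cancel_mono (L.map φ.s), ← L.map_comp, h2, zero_comp]
    exact h1.symm
  have h3 : (0 : P' ⟶ Q') = (0 : P' ⟶ (0 : C)) ≫ (0 : (0 : C) ⟶ Q') := by simp
  rw [h3, L.map_comp, h0, comp_zero]

end Auxiliary


/-- The canonical functor `Q : T → T/S_T(p)` to the Verdier quotient (modelled as a
localization `L` of `C` at the morphisms whose cone lies in `S_T(p)`) induces, for all
`M, N`, an isomorphism `Hom_T(M,N)_p ≅ Hom_{T/S_T(p)}(M,N)`, `f/a ↦ Q(a • 𝟙 N)⁻¹ ∘ Q(f)`: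
the kernel of `f ↦ L.map f` is exactly the `p`-torsion, and every morphism
`α : L M ⟶ L N` is of the form `Q(a • 𝟙 N)⁻¹ ∘ Q(f)`, i.e. `α ≫ L.map (a • 𝟙 N) = L.map f`. -/
theorem stmt7 (R : Type*) [CommRing R] [IsNoetherianRing R] (p : Ideal R) [p.IsPrime]
    [CategoryTheory.Linear R C] [∀ n : ℤ, (shiftFunctor C n).Linear R]
    (D : Type*) [Category D] [Preadditive D] (L : C ⥤ D)
    [L.IsLocalization (coneW C R p)] (M N : C) :
    (∀ f : M ⟶ N, L.map f = 0 ↔ ∃ a ∈ p.primeCompl, a • f = 0) ∧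
    (∀ α : L.obj M ⟶ L.obj N, ∃ (f : M ⟶ N) (a : R), a ∈ p.primeCompl ∧
        α ≫ L.map (a • 𝟙 N) = L.map f) := by
  have hWeq : coneW C R p = (killSub C R p).trW := coneW_eq C R p
  set W := (killSub C R p).trW with hW
  haveI hLoc : L.IsLocalization W := by rw [← hWeq]; infer_instance
  have hz : ∀ (P' Q' : C), L.map (0 : P' ⟶ Q') = 0 :=
    map_zero_of_localization C L W
  constructor
  · intro f
    constructor
    · intro hf
      have hf' : L.map f = L.map (0 : M ⟶ N) := by rw [hf, hz]
      rw [MorphismProperty.map_eq_iff_postcomp L W] at hf'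
      obtain ⟨Z, s, hs, fac⟩ := hf'
      rw [zero_comp] at fac
      obtain ⟨K, g, h, HT, a, ha, hK⟩ := hs
      obtain ⟨w, hw⟩ := Triangle.coyoneda_exact₂ _ (inv_rot_of_distTriang _ HT) f fac
      refine ⟨a, ha, ?_⟩
      have h0 : a • (𝟙 ((Triangle.mk s g h).invRotate.obj₁)) = 0 := shift_smul_id_zero C R hK (-1)
      have : a • f = w ≫ ((a • 𝟙 ((Triangle.mk s g h).invRotate.obj₁)) ≫ (Triangle.mk s g h).invRotate.mor₁) := by
        rw [hw]
        have key : ∀ (Y : C) (m : M ⟶ Y) (n : Y ⟶ N), a • (m ≫ n) = m ≫ (a • 𝟙 Y) ≫ n := by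
          intro Y m n; simp
        exact key _ _ _
      rw [this, h0, zero_comp, comp_zero]
      rfl
    · rintro ⟨a, ha, haf⟩
      obtain ⟨Z, g, h, HT⟩ := distinguished_cocone_triangle (a • 𝟙 N)
      have hzh : (a • 𝟙 Z) ≫ h = 0 := by
        have h1 : h ≫ ((a • 𝟙 N)⟦(1 : ℤ)⟧') = 0 := comp_distTriang_mor_zero₃₁ _ HT
        have h2 : (a • 𝟙 Z) ≫ h = h ≫ ((a • 𝟙 N)⟦(1 : ℤ)⟧') := by
          rw [Functor.map_smul, CategoryTheory.Functor.map_id]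
          simp
        rw [h2, h1]
      obtain ⟨w, hw⟩ : ∃ w : Z ⟶ N, a • 𝟙 Z = w ≫ g :=
        Triangle.coyoneda_exact₃ _ HT (a • 𝟙 Z) hzh
      have hZ : (a * a) • 𝟙 Z = 0 := by
        have h3 : (a • 𝟙 N) ≫ g = 0 := comp_distTriang_mor_zero₁₂ _ HT
        have h4 : (a * a) • 𝟙 Z = w ≫ ((a • 𝟙 N) ≫ g) := by
          rw [mul_smul, hw]
          simp
        rw [h4, h3, comp_zero]
      have hWa : W (a • 𝟙 N) := ⟨Z, g, h, HT, a * a, p.primeCompl.mul_mem ha ha, hZ⟩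
      haveI := Localization.inverts L W _ hWa
      have h5 : L.map f ≫ L.map (a • 𝟙 N) = 0 := by
        rw [← L.map_comp, show f ≫ (a • 𝟙 N) = (0 : M ⟶ N) by simp [haf], hz]
      rw [← cancel_mono (L.map (a • 𝟙 N)), h5, zero_comp]
  · intro α
    obtain ⟨φ, hφ⟩ := Localization.exists_leftFraction L W α
    obtain ⟨K, g, h, HT, a, ha, hK⟩ := φ.hs
    obtain ⟨t, ht⟩ : ∃ t : φ.Y' ⟶ N, a • 𝟙 φ.Y' = t ≫ φ.s :=
      Triangle.coyoneda_exact₂ _ HT (a • 𝟙 φ.Y') (by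
      change (a • 𝟙 φ.Y') ≫ g = 0
      have : (a • 𝟙 φ.Y') ≫ g = g ≫ (a • 𝟙 K) := by simp
      rw [this, hK, comp_zero])
    refine ⟨φ.f ≫ t, a, ha, ?_⟩
    have e1 : L.map (a • 𝟙 N) = L.map (φ.s ≫ t) := by
      rw [MorphismProperty.map_eq_iff_postcomp L W]
      refine ⟨φ.Y', φ.s, φ.hs, ?_⟩
      rw [Category.assoc, ← ht]
      simp
    calc α ≫ L.map (a • 𝟙 N) = α ≫ L.map (φ.s ≫ t) := by rw [e1]
      _ = (α ≫ L.map φ.s) ≫ L.map t := by rw [L.map_comp, Category.assoc]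
      _ = L.map φ.f ≫ L.map t := by
          rw [hφ, φ.map_comp_map_s]
      _ = L.map (φ.f ≫ t) := (L.map_comp _ _).symm
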